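/- On an almost Hermitian manifold, the Riemannian scalar curvature s, the Riemannian-type scalar curvature s_R = h^{i\bar\ell} h^{k\bar j} R_{i\bar j k\bar\ell}, and the Hermitian scalar curvature s_H = h^{i\bar j} h^{k\bar\ell} R_{i\bar j k\bar\ell} satisfy s = 4 s_R - 2 s_H. -/

import Mathlib

open Complex BigOperators

noncomputable section

/-- Index set for real coordinates `x^1,…,x^n, x^{n+1},…,x^{2n}` on an
almost Hermitian manifold of real dimension `2n`:  `Sum.inl i ↔ x^i`,
`Sum.inr i ↔ x^{I} (I = i+n)`. -/
abbrev Ix (n : ℕ) := Sum (Fin n) (Fin n)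

variable {n : ℕ}

/-- Inclusion of a real tangent vector into the complexified tangent space. -/
def cx (v : Ix n → ℝ) : Ix n → ℂ := fun a => (v a : ℂ)

/-- The (ℂ-linearly extended) almost complex structure `J`:
`J(∂/∂x^i) = ∂/∂x^I`, `J(∂/∂x^I) = -∂/∂x^i`. -/
def Jc (v : Ix n → ℂ) : Ix n → ℂ :=
  fun a => Sum.elim (fun i => -v (Sum.inr i)) (fun i => v (Sum.inl i)) a

/-- The complex tangent vector `∂/∂z^i = (∂/∂x^i - √-1 ∂/∂x^I)/2`. -/
def Zv (i : Fin n) : Ix n → ℂ := fun a =>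
  if a = Sum.inl i then 1/2 else if a = Sum.inr i then -Complex.I/2 else 0

/-- The complex tangent vector `∂/∂z̄^i = (∂/∂x^i + √-1 ∂/∂x^I)/2`. -/
def Zbarv (i : Fin n) : Ix n → ℂ := fun a =>
  if a = Sum.inl i then 1/2 else if a = Sum.inr i then Complex.I/2 else 0

-- J acts on Zv as multiplication by I
lemma JZv (i : Fin n) : Jc (Zv i) = (Complex.I : ℂ) • Zv i := by
  funext b
  cases b with
  | inl k => by_cases h : k = i <;> simp [Jc, Zv, h, Complex.ext_iff] <;> norm_num
  | inr k => by_cases h : k = i <;> simp [Jc, Zv, h, Complex.ext_iff] <;> norm_num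

lemma JZbarv (i : Fin n) : Jc (Zbarv i) = (-Complex.I : ℂ) • Zbarv i := by
  funext b
  cases b with
  | inl k => by_cases h : k = i <;> simp [Jc, Zbarv, h, Complex.ext_iff] <;> norm_num
  | inr k => by_cases h : k = i <;> simp [Jc, Zbarv, h, Complex.ext_iff] <;> norm_num

/-- helper: bilinear map applied to a finite combination, left slot -/
lemma bil_sum_left {ι : Type*} [Fintype ι] (B : (Ix n → ℂ) →ₗ[ℂ] (Ix n → ℂ) →ₗ[ℂ] ℂ)
    (c : ι → ℂ) (v : ι → (Ix n → ℂ)) (x : Ix n → ℂ) :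
    B (∑ a, c a • v a) x = ∑ a, c a * B (v a) x := by
  rw [map_sum, LinearMap.sum_apply]
  simp only [map_smul, LinearMap.smul_apply, smul_eq_mul]

lemma bil_sum_right {ι : Type*} [Fintype ι] (B : (Ix n → ℂ) →ₗ[ℂ] (Ix n → ℂ) →ₗ[ℂ] ℂ)
    (c : ι → ℂ) (v : ι → (Ix n → ℂ)) (x : Ix n → ℂ) :
    B x (∑ a, c a • v a) = ∑ a, c a * B x (v a) := by
  rw [map_sum]
  simp only [map_smul, smul_eq_mul]

lemma expand_mul_sum {α ι κ : Type*} [Fintype α] [Fintype ι] [Fintype κ]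
    (f : ι → α → ℂ) (g : κ → α → ℂ) :
    ∑ a, (∑ p, f p a) * (∑ q, g q a) = ∑ p, ∑ q, ∑ a, f p a * g q a := by
  simp_rw [Finset.sum_mul_sum]
  rw [Finset.sum_comm]
  exact Finset.sum_congr rfl fun p _ => Finset.sum_comm

lemma sum_pull {α ι κ : Type*} [Fintype α] [Fintype ι] [Fintype κ]
    (f : α → ι → κ → ℂ) (g : ι → κ → ℂ) :
    ∑ a, ∑ i, ∑ j, f a i j * g i j = ∑ i, ∑ j, (∑ a, f a i j) * g i j := by
  rw [Finset.sum_comm]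
  refine Finset.sum_congr rfl fun i _ => ?_
  rw [Finset.sum_comm]
  exact Finset.sum_congr rfl fun j _ => (Finset.sum_mul _ _ _).symm

lemma delta_sum' {ι : Type*} [Fintype ι] [DecidableEq ι] (c : ι → ℂ) (b : ι) :
    ∑ a, c a * (if b = a then 1 else 0) = c b := by
  simp [mul_ite, Finset.sum_ite_eq]

lemma delta_sum {ι : Type*} [Fintype ι] [DecidableEq ι] (c : ι → ℂ) (b : ι) :
    ∑ a, c a * (if a = b then 1 else 0) = c b := by
  simp [mul_ite, Finset.sum_ite_eq']

section trace

variable (gc : (Ix n → ℂ) →ₗ[ℂ] (Ix n → ℂ) →ₗ[ℂ] ℂ)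
  (e : Ix n → (Ix n → ℝ)) (hinv : Fin n → Fin n → ℂ)

/-- gc vanishes on pairs of (1,0)-vectors. -/
lemma gZZ (hgJ : ∀ X Y, gc (Jc X) (Jc Y) = gc X Y) (i k : Fin n) :
    gc (Zv i) (Zv k) = 0 := by
  have h := hgJ (Zv i) (Zv k)
  rw [JZv, JZv, map_smul, map_smul, LinearMap.smul_apply] at h
  simp only [smul_eq_mul] at h
  have : Complex.I * Complex.I = -1 := Complex.I_mul_I
  linear_combination (-1/2 : ℂ) * h + (1/2 : ℂ) * (gc (Zv i)) (Zv k) * this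

lemma gZbZb (hgJ : ∀ X Y, gc (Jc X) (Jc Y) = gc X Y) (i k : Fin n) :
    gc (Zbarv i) (Zbarv k) = 0 := by
  have h := hgJ (Zbarv i) (Zbarv k)
  rw [JZbarv, JZbarv, map_smul, map_smul, LinearMap.smul_apply] at h
  simp only [smul_eq_mul] at h
  have : Complex.I * Complex.I = -1 := Complex.I_mul_I
  linear_combination (-1/2 : ℂ) * h + (1/2 : ℂ) * (gc (Zbarv i)) (Zbarv k) * this

/-- the other inverse relation: ∑ i, h i k * hinv i l = δ k l -/
lemma hinvh2
    (hinvh : ∀ i k, (∑ l, hinv i l * gc (Zv k) (Zbarv l)) = if i = k then 1 else 0)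
    (k l : Fin n) :
    (∑ i, gc (Zv i) (Zbarv k) * hinv i l) = if k = l then 1 else 0 := by
  classical
  let A : Matrix (Fin n) (Fin n) ℂ := Matrix.of hinv
  let B : Matrix (Fin n) (Fin n) ℂ := Matrix.of (fun l k => gc (Zv k) (Zbarv l))
  have hAB : A * B = 1 := by
    ext i k
    rw [Matrix.mul_apply, Matrix.one_apply]
    simpa [A, B] using hinvh i k
  have hBA : B * A = 1 := mul_eq_one_comm.mp hAB
  have := congrFun (congrFun hBA k) l
  rw [Matrix.mul_apply, Matrix.one_apply] at this
  simpa [A, B] using this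

/-- expansion of any vector in the orthonormal frame -/
lemma expand_frame
    (hgsym : ∀ X Y, gc X Y = gc Y X)
    (horth : ∀ a b, gc (cx (e a)) (cx (e b)) = if a = b then 1 else 0)
    (Y : Ix n → ℂ) :
    Y = ∑ a, gc Y (cx (e a)) • cx (e a) := by
  rcases Nat.eq_zero_or_pos n with hn | hn
  · subst hn
    funext b; exact b.elim (fun x => x.elim0) (fun x => x.elim0)
  have : Nonempty (Ix n) := ⟨Sum.inl ⟨0, hn⟩⟩
  have hli : LinearIndependent ℂ (fun a => cx (e a)) := by
    rw [Fintype.linearIndependent_iff]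
    intro g hg b
    have h0 : gc (∑ a, g a • cx (e a)) (cx (e b)) = 0 := by rw [hg]; simp
    rw [bil_sum_left] at h0
    rw [Finset.sum_congr rfl (fun a _ => by rw [horth a b]), delta_sum] at h0
    exact h0
  have hcard : Fintype.card (Ix n) = Module.finrank ℂ (Ix n → ℂ) := by
    rw [Module.finrank_fintype_fun_eq_card]
  let bas := basisOfLinearIndependentOfCardEqFinrank hli hcard
  have hbas : ⇑bas = fun a => cx (e a) := coe_basisOfLinearIndependentOfCardEqFinrank hli hcard
  have hsum : ∑ a, bas.repr Y a • cx (e a) = Y := by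
    have h := bas.sum_repr Y
    simp only [hbas] at h
    exact h
  have hrepr : ∀ b, bas.repr Y b = gc Y (cx (e b)) := by
    intro b
    rw [hgsym]
    conv_rhs => rw [← hsum]
    rw [bil_sum_right]
    rw [Finset.sum_congr rfl (fun a _ => by rw [horth b a]), delta_sum']
  conv_lhs => rw [← hsum]
  refine Finset.sum_congr rfl fun a _ => ?_
  rw [hrepr]

lemma reproduce
    (hgsym : ∀ X Y, gc X Y = gc Y X)
    (horth : ∀ a b, gc (cx (e a)) (cx (e b)) = if a = b then 1 else 0)
    (X Y : Ix n → ℂ) :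
    gc X Y = ∑ a, gc X (cx (e a)) * gc Y (cx (e a)) := by
  conv_lhs => rw [expand_frame gc e hgsym horth Y]
  rw [map_sum]
  refine Finset.sum_congr rfl fun a _ => ?_
  rw [map_smul]
  simp [mul_comm]

/-- coordinates of the frame vectors in the Z, Zbar basis -/
lemma frame_decomp (a : Ix n) :
    cx (e a) = (∑ i, ((e a (Sum.inl i) : ℂ) + Complex.I * e a (Sum.inr i)) • Zv i)
      + (∑ i, ((e a (Sum.inl i) : ℂ) - Complex.I * e a (Sum.inr i)) • Zbarv i) := by
  funext b
  simp only [Pi.add_apply, Finset.sum_apply, Pi.smul_apply, smul_eq_mul]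
  cases b with
  | inl k =>
      rw [Finset.sum_eq_single k (fun i _ hik => by simp [Zv, Ne.symm hik]) (by simp),
        Finset.sum_eq_single k (fun i _ hik => by simp [Zbarv, Ne.symm hik]) (by simp)]
      simp [cx, Zv, Zbarv]
      ring
  | inr k =>
      rw [Finset.sum_eq_single k (fun i _ hik => by simp [Zv, Ne.symm hik]) (by simp),
        Finset.sum_eq_single k (fun i _ hik => by simp [Zbarv, Ne.symm hik]) (by simp)]
      simp [cx, Zv, Zbarv]
      have hI : Complex.I * Complex.I = -1 := Complex.I_mul_I
      ring_nf
      linear_combination (e a (Sum.inr k) : ℂ) * hI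

/-- The trace lemma: frame trace of a bilinear form equals hinv-contraction. -/
lemma trace_lemma
    (hgsym : ∀ X Y, gc X Y = gc Y X)
    (hgJ : ∀ X Y, gc (Jc X) (Jc Y) = gc X Y)
    (horth : ∀ a b, gc (cx (e a)) (cx (e b)) = if a = b then 1 else 0)
    (hinvh : ∀ i k, (∑ l, hinv i l * gc (Zv k) (Zbarv l)) = if i = k then 1 else 0)
    (B : (Ix n → ℂ) →ₗ[ℂ] (Ix n → ℂ) →ₗ[ℂ] ℂ) :
    ∑ a, B (cx (e a)) (cx (e a))
      = ∑ i, ∑ j, hinv i j * (B (Zv i) (Zbarv j) + B (Zbarv j) (Zv i)) := by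
  classical
  set c : Ix n → Fin n → ℂ :=
    fun a i => (e a (Sum.inl i) : ℂ) + Complex.I * e a (Sum.inr i) with hc_def
  set d : Ix n → Fin n → ℂ :=
    fun a i => (e a (Sum.inl i) : ℂ) - Complex.I * e a (Sum.inr i) with hd_def
  have hdec : ∀ a, cx (e a) = (∑ i, c a i • Zv i) + (∑ i, d a i • Zbarv i) :=
    fun a => frame_decomp e a
  -- pairing of Z, Zbar with the frame vectors
  have hgb : ∀ (j : Fin n) (a : Ix n),
      gc (Zbarv j) (cx (e a)) = ∑ k, c a k * gc (Zv k) (Zbarv j) := by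
    intro j a
    rw [hdec a, map_add, bil_sum_right, bil_sum_right]
    have h2 : ∑ k, d a k * gc (Zbarv j) (Zbarv k) = 0 :=
      Finset.sum_eq_zero (fun k _ => by rw [gZbZb gc hgJ j k, mul_zero])
    rw [h2, add_zero]
    exact Finset.sum_congr rfl fun k _ => by rw [hgsym]
  have hgz : ∀ (i : Fin n) (a : Ix n),
      gc (Zv i) (cx (e a)) = ∑ k, d a k * gc (Zv i) (Zbarv k) := by
    intro i a
    rw [hdec a, map_add, bil_sum_right, bil_sum_right]
    have h1 : ∑ k, c a k * gc (Zv i) (Zv k) = 0 :=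
      Finset.sum_eq_zero (fun k _ => by rw [gZZ gc hgJ i k, mul_zero])
    rw [h1, zero_add]
  -- expressing the coordinates through gc
  have hc : ∀ (a : Ix n) (i : Fin n),
      c a i = ∑ j, hinv i j * gc (Zbarv j) (cx (e a)) := by
    intro a i
    rw [Finset.sum_congr rfl (fun j _ => by rw [hgb j a, Finset.mul_sum])]
    rw [Finset.sum_comm]
    rw [Finset.sum_congr rfl (fun k _ => by
      rw [show (∑ j, hinv i j * (c a k * gc (Zv k) (Zbarv j)))
          = c a k * ∑ j, hinv i j * gc (Zv k) (Zbarv j) by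
        rw [Finset.mul_sum]; exact Finset.sum_congr rfl fun j _ => by ring,
        hinvh i k])]
    rw [delta_sum']
  have hd : ∀ (a : Ix n) (l : Fin n),
      d a l = ∑ i, hinv i l * gc (Zv i) (cx (e a)) := by
    intro a l
    rw [Finset.sum_congr rfl (fun i _ => by rw [hgz i a, Finset.mul_sum])]
    rw [Finset.sum_comm]
    rw [Finset.sum_congr rfl (fun k _ => by
      rw [show (∑ i, hinv i l * (d a k * gc (Zv i) (Zbarv k)))
          = d a k * ∑ i, gc (Zv i) (Zbarv k) * hinv i l by
        rw [Finset.mul_sum]; exact Finset.sum_congr rfl fun i _ => by ring,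
        hinvh2 gc hinv hinvh k l])]
    rw [delta_sum]
  -- the coefficient identities
  have hrep := reproduce gc e hgsym horth
  have hM : ∀ i j, ∑ a, c a i * d a j = hinv i j := by
    intro i j
    rw [Finset.sum_congr rfl (fun a _ => by rw [hc a i, hd a j])]
    rw [expand_mul_sum]
    rw [Finset.sum_congr rfl (fun p _ => Finset.sum_congr rfl (fun q _ => by
      rw [show (∑ a, (hinv i p * gc (Zbarv p) (cx (e a))) * (hinv q j * gc (Zv q) (cx (e a))))
          = hinv i p * hinv q j * ∑ a, gc (Zbarv p) (cx (e a)) * gc (Zv q) (cx (e a)) by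
        rw [Finset.mul_sum]; exact Finset.sum_congr rfl fun a _ => by ring,
        ← hrep (Zbarv p) (Zv q), hgsym (Zbarv p) (Zv q)]))]
    rw [Finset.sum_comm]
    rw [Finset.sum_congr rfl (fun q _ => by
      rw [show (∑ p, hinv i p * hinv q j * gc (Zv q) (Zbarv p))
          = hinv q j * ∑ p, hinv i p * gc (Zv q) (Zbarv p) by
        rw [Finset.mul_sum]; exact Finset.sum_congr rfl fun p _ => by ring,
        hinvh i q])]
    rw [delta_sum']
  have hM' : ∀ i j, ∑ a, d a i * c a j = hinv j i := by
    intro i j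
    rw [Finset.sum_congr rfl (fun a _ => by rw [hd a i, hc a j])]
    rw [expand_mul_sum]
    rw [Finset.sum_congr rfl (fun p _ => Finset.sum_congr rfl (fun q _ => by
      rw [show (∑ a, (hinv p i * gc (Zv p) (cx (e a))) * (hinv j q * gc (Zbarv q) (cx (e a))))
          = hinv p i * hinv j q * ∑ a, gc (Zv p) (cx (e a)) * gc (Zbarv q) (cx (e a)) by
        rw [Finset.mul_sum]; exact Finset.sum_congr rfl fun a _ => by ring,
        ← hrep (Zv p) (Zbarv q)]))]
    rw [Finset.sum_congr rfl (fun p _ => by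
      rw [show (∑ q, hinv p i * hinv j q * gc (Zv p) (Zbarv q))
          = hinv p i * ∑ q, hinv j q * gc (Zv p) (Zbarv q) by
        rw [Finset.mul_sum]; exact Finset.sum_congr rfl fun q _ => by ring,
        hinvh j p])]
    rw [delta_sum']
  have hC : ∀ i j, ∑ a, c a i * c a j = 0 := by
    intro i j
    rw [Finset.sum_congr rfl (fun a _ => by rw [hc a i, hc a j])]
    rw [expand_mul_sum]
    rw [Finset.sum_congr rfl (fun p _ => Finset.sum_congr rfl (fun q _ => by
      rw [show (∑ a, (hinv i p * gc (Zbarv p) (cx (e a))) * (hinv j q * gc (Zbarv q) (cx (e a))))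
          = hinv i p * hinv j q * ∑ a, gc (Zbarv p) (cx (e a)) * gc (Zbarv q) (cx (e a)) by
        rw [Finset.mul_sum]; exact Finset.sum_congr rfl fun a _ => by ring,
        ← hrep (Zbarv p) (Zbarv q), gZbZb gc hgJ p q, mul_zero]))]
    simp
  have hD : ∀ i j, ∑ a, d a i * d a j = 0 := by
    intro i j
    rw [Finset.sum_congr rfl (fun a _ => by rw [hd a i, hd a j])]
    rw [expand_mul_sum]
    rw [Finset.sum_congr rfl (fun p _ => Finset.sum_congr rfl (fun q _ => by
      rw [show (∑ a, (hinv p i * gc (Zv p) (cx (e a))) * (hinv q j * gc (Zv q) (cx (e a))))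
          = hinv p i * hinv q j * ∑ a, gc (Zv p) (cx (e a)) * gc (Zv q) (cx (e a)) by
        rw [Finset.mul_sum]; exact Finset.sum_congr rfl fun a _ => by ring,
        ← hrep (Zv p) (Zv q), gZZ gc hgJ p q, mul_zero]))]
    simp
  -- expand B over the frame
  have hBa : ∀ a, B (cx (e a)) (cx (e a)) =
      (∑ i, ∑ j, c a i * c a j * B (Zv i) (Zv j))
      + (∑ i, ∑ j, c a i * d a j * B (Zv i) (Zbarv j))
      + (∑ i, ∑ j, d a i * c a j * B (Zbarv i) (Zv j))
      + (∑ i, ∑ j, d a i * d a j * B (Zbarv i) (Zbarv j)) := by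
    intro a
    rw [hdec a]
    simp only [map_add, LinearMap.add_apply]
    simp only [bil_sum_left]
    simp only [bil_sum_right]
    simp only [Finset.mul_sum, ← mul_assoc]
    ring
  calc ∑ a, B (cx (e a)) (cx (e a))
      = (∑ a, ∑ i, ∑ j, c a i * c a j * B (Zv i) (Zv j))
        + (∑ a, ∑ i, ∑ j, c a i * d a j * B (Zv i) (Zbarv j))
        + (∑ a, ∑ i, ∑ j, d a i * c a j * B (Zbarv i) (Zv j))
        + (∑ a, ∑ i, ∑ j, d a i * d a j * B (Zbarv i) (Zbarv j)) := by
        rw [Finset.sum_congr rfl (fun a _ => hBa a)]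
        rw [Finset.sum_add_distrib, Finset.sum_add_distrib, Finset.sum_add_distrib]
    _ = (∑ i, ∑ j, (∑ a, c a i * c a j) * B (Zv i) (Zv j))
        + (∑ i, ∑ j, (∑ a, c a i * d a j) * B (Zv i) (Zbarv j))
        + (∑ i, ∑ j, (∑ a, d a i * c a j) * B (Zbarv i) (Zv j))
        + (∑ i, ∑ j, (∑ a, d a i * d a j) * B (Zbarv i) (Zbarv j)) := by
        rw [sum_pull, sum_pull, sum_pull, sum_pull]
    _ = (∑ i, ∑ j, hinv i j * B (Zv i) (Zbarv j))
        + (∑ i, ∑ j, hinv j i * B (Zbarv i) (Zv j)) := by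
        simp only [hM, hM', hC, hD, zero_mul, Finset.sum_const_zero, add_zero, zero_add]
    _ = ∑ i, ∑ j, hinv i j * (B (Zv i) (Zbarv j) + B (Zbarv j) (Zv i)) := by
        rw [show (∑ i, ∑ j, hinv j i * B (Zbarv i) (Zv j))
            = ∑ i, ∑ j, hinv i j * B (Zbarv j) (Zv i) from Finset.sum_comm]
        rw [← Finset.sum_add_distrib]
        refine Finset.sum_congr rfl fun i _ => ?_
        rw [← Finset.sum_add_distrib]
        exact Finset.sum_congr rfl fun j _ => by ring

end trace


-- ### helpers for the main theorem

lemma upd4_0 {α : Type*} (w x y z t : α) :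
    Function.update ![w, x, y, z] 0 t = ![t, x, y, z] := by
  funext i; fin_cases i <;> simp
lemma upd4_1 {α : Type*} (w x y z t : α) :
    Function.update ![w, x, y, z] 1 t = ![w, t, y, z] := by
  funext i; fin_cases i <;> simp
lemma upd4_2 {α : Type*} (w x y z t : α) :
    Function.update ![w, x, y, z] 2 t = ![w, x, t, z] := by
  funext i; fin_cases i <;> simp
lemma upd4_3 {α : Type*} (w x y z t : α) :
    Function.update ![w, x, y, z] 3 t = ![w, x, y, t] := by
  funext i; fin_cases i <;> simp

/-- the bilinear map `X, Y ↦ R(w, X, Y, z)` -/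
def bmid (R : MultilinearMap ℂ (fun _ : Fin 4 => (Ix n → ℂ)) ℂ) (w z : Ix n → ℂ) :
    (Ix n → ℂ) →ₗ[ℂ] (Ix n → ℂ) →ₗ[ℂ] ℂ :=
  LinearMap.mk₂ ℂ (fun X Y => R ![w, X, Y, z])
    (fun a b y => by simpa [upd4_1] using R.map_update_add ![w, 0, y, z] 1 a b)
    (fun cc a y => by simpa [upd4_1] using R.map_update_smul ![w, 0, y, z] 1 cc a)
    (fun x a b => by simpa [upd4_2] using R.map_update_add ![w, x, 0, z] 2 a b)
    (fun cc x a => by simpa [upd4_2] using R.map_update_smul ![w, x, 0, z] 2 cc a)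

@[simp] lemma bmid_apply (R : MultilinearMap ℂ (fun _ : Fin 4 => (Ix n → ℂ)) ℂ)
    (w z X Y : Ix n → ℂ) : bmid R w z X Y = R ![w, X, Y, z] := rfl

/-- the bilinear map `X, Y ↦ R(X, p, q, Y)` -/
def bout (R : MultilinearMap ℂ (fun _ : Fin 4 => (Ix n → ℂ)) ℂ) (p q : Ix n → ℂ) :
    (Ix n → ℂ) →ₗ[ℂ] (Ix n → ℂ) →ₗ[ℂ] ℂ :=
  LinearMap.mk₂ ℂ (fun X Y => R ![X, p, q, Y])
    (fun a b y => by simpa [upd4_0] using R.map_update_add ![0, p, q, y] 0 a b)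
    (fun cc a y => by simpa [upd4_0] using R.map_update_smul ![0, p, q, y] 0 cc a)
    (fun x a b => by simpa [upd4_3] using R.map_update_add ![x, p, q, 0] 3 a b)
    (fun cc x a => by simpa [upd4_3] using R.map_update_smul ![x, p, q, 0] 3 cc a)

@[simp] lemma bout_apply (R : MultilinearMap ℂ (fun _ : Fin 4 => (Ix n → ℂ)) ℂ)
    (p q X Y : Ix n → ℂ) : bout R p q X Y = R ![X, p, q, Y] := rfl

lemma sum4_pack (f : Fin n → Fin n → Fin n → Fin n → ℂ) :
    ∑ p : Fin n × Fin n × Fin n × Fin n, f p.1 p.2.1 p.2.2.1 p.2.2.2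
      = ∑ i, ∑ j, ∑ k, ∑ l, f i j k l := by
  rw [Fintype.sum_prod_type]
  refine Finset.sum_congr rfl fun i _ => ?_
  rw [Fintype.sum_prod_type]
  refine Finset.sum_congr rfl fun j _ => ?_
  rw [Fintype.sum_prod_type]


/-- the Riemannian scalar curvature `s`, the Riemannian-type
scalar curvature `s_R = h^{i\bar ℓ}h^{k\bar j}R_{i\bar j k\bar ℓ}` and the Hermitian
scalar curvature `s_H = h^{i\bar j}h^{k\bar ℓ}R_{i\bar j k\bar ℓ}` satisfy
`s = 4 s_R - 2 s_H`. -/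
theorem scalar_eq_four_sR_sub_two_sH
    (gc : (Ix n → ℂ) →ₗ[ℂ] (Ix n → ℂ) →ₗ[ℂ] ℂ)
    (R : MultilinearMap ℂ (fun _ : Fin 4 => (Ix n → ℂ)) ℂ)
    (e : Ix n → (Ix n → ℝ))
    (hinv : Fin n → Fin n → ℂ)
    -- `g` is symmetric, real-valued and positive definite on real vectors,
    -- and `J`-invariant:
    (hgsym : ∀ X Y, gc X Y = gc Y X)
    (hgreal : ∀ X Y : Ix n → ℝ, (gc (cx X) (cx Y)).im = 0)
    (hgpos : ∀ X : Ix n → ℝ, X ≠ 0 → 0 < (gc (cx X) (cx X)).re)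
    (hgJ : ∀ X Y, gc (Jc X) (Jc Y) = gc X Y)
    -- `{e a}` is a (real) orthonormal frame:
    (horth : ∀ a b, gc (cx (e a)) (cx (e b)) = if a = b then 1 else 0)
    -- `hinv` is the transposed inverse of `h_{i\bar j} = g(∂/∂z^i, ∂/∂z̄^j)`:
    (hinvh : ∀ i k, (∑ l, hinv i l * gc (Zv k) (Zbarv l)) = if i = k then 1 else 0)
    -- the complexified curvature tensor has the symmetries of a Riemannian
    -- curvature tensor, is real on real vectors, and satisfies the
    -- first Bianchi identity:
    (hRskew : ∀ X Y Z W, R ![X, Y, Z, W] = - R ![Y, X, Z, W])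
    (hRpair : ∀ X Y Z W, R ![X, Y, Z, W] = R ![Z, W, X, Y])
    (hRreal : ∀ X Y Z W : Ix n → ℝ, (R ![cx X, cx Y, cx Z, cx W]).im = 0)
    (hRbianchi : ∀ X Y Z W, R ![X, Y, Z, W] + R ![Y, Z, X, W] + R ![Z, X, Y, W] = 0) :
    (∑ a : Ix n, ∑ b : Ix n, R ![cx (e b), cx (e a), cx (e a), cx (e b)]) =
      4 * (∑ i, ∑ j, ∑ k, ∑ l, hinv i l * hinv k j * R ![Zv i, Zbarv j, Zv k, Zbarv l])
        - 2 * (∑ i, ∑ j, ∑ k, ∑ l, hinv i j * hinv k l * R ![Zv i, Zbarv j, Zv k, Zbarv l]) := by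
  classical
  have tr := trace_lemma gc e hinv hgsym hgJ horth hinvh
  have step1 : ∀ b : Ix n, (∑ a, R ![cx (e b), cx (e a), cx (e a), cx (e b)])
      = ∑ i, ∑ j, hinv i j * (R ![cx (e b), Zv i, Zbarv j, cx (e b)]
          + R ![cx (e b), Zbarv j, Zv i, cx (e b)]) := by
    intro b
    simpa using tr (bmid R (cx (e b)) (cx (e b)))
  have step2 : ∀ P Q : Ix n → ℂ, (∑ b, R ![cx (e b), P, Q, cx (e b)])
      = ∑ k, ∑ l, hinv k l * (R ![Zv k, P, Q, Zbarv l] + R ![Zbarv l, P, Q, Zv k]) := by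
    intro P Q
    simpa using tr (bout R P Q)
  have hbr : ∀ i j k l : Fin n,
      R ![Zv k, Zv i, Zbarv j, Zbarv l] + R ![Zbarv l, Zv i, Zbarv j, Zv k]
        + R ![Zv k, Zbarv j, Zv i, Zbarv l] + R ![Zbarv l, Zbarv j, Zv i, Zv k]
      = -(R ![Zv i, Zbarv j, Zv k, Zbarv l]) - R ![Zv k, Zbarv l, Zv i, Zbarv j]
        + 2 * R ![Zv k, Zbarv j, Zv i, Zbarv l] + 2 * R ![Zv i, Zbarv l, Zv k, Zbarv j] := by
    intro i j k l
    linear_combination hRbianchi (Zv k) (Zv i) (Zbarv j) (Zbarv l)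
      - 2 * hRskew (Zbarv j) (Zv k) (Zv i) (Zbarv l)
      + hRskew (Zbarv l) (Zv i) (Zbarv j) (Zv k)
      - hRpair (Zv i) (Zbarv l) (Zbarv j) (Zv k)
      + hRpair (Zbarv l) (Zbarv j) (Zv i) (Zv k)
      + hRbianchi (Zv i) (Zv k) (Zbarv l) (Zbarv j)
      - hRskew (Zbarv l) (Zv i) (Zv k) (Zbarv j)
      + hRpair (Zv k) (Zbarv j) (Zv i) (Zbarv l)
  have reB : (∑ i, ∑ j, ∑ k, ∑ l, hinv i j * hinv k l * R ![Zv k, Zbarv l, Zv i, Zbarv j])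
      = ∑ i, ∑ j, ∑ k, ∑ l, hinv i j * hinv k l * R ![Zv i, Zbarv j, Zv k, Zbarv l] := by
    rw [← sum4_pack, ← sum4_pack]
    exact Fintype.sum_equiv
      ⟨fun p => (p.2.2.1, p.2.2.2, p.1, p.2.1), fun p => (p.2.2.1, p.2.2.2, p.1, p.2.1),
        fun p => rfl, fun p => rfl⟩ _ _ (fun p => by simp only [Equiv.coe_fn_mk]; try ring)
  have reC : (∑ i, ∑ j, ∑ k, ∑ l, hinv i j * hinv k l * R ![Zv k, Zbarv j, Zv i, Zbarv l])
      = ∑ i, ∑ j, ∑ k, ∑ l, hinv i l * hinv k j * R ![Zv i, Zbarv j, Zv k, Zbarv l] := by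
    rw [← sum4_pack, ← sum4_pack]
    exact Fintype.sum_equiv
      ⟨fun p => (p.2.2.1, p.2.1, p.1, p.2.2.2), fun p => (p.2.2.1, p.2.1, p.1, p.2.2.2),
        fun p => rfl, fun p => rfl⟩ _ _ (fun p => by simp only [Equiv.coe_fn_mk]; try ring)
  have reD : (∑ i, ∑ j, ∑ k, ∑ l, hinv i j * hinv k l * R ![Zv i, Zbarv l, Zv k, Zbarv j])
      = ∑ i, ∑ j, ∑ k, ∑ l, hinv i l * hinv k j * R ![Zv i, Zbarv j, Zv k, Zbarv l] := by
    rw [← sum4_pack, ← sum4_pack]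
    exact Fintype.sum_equiv
      ⟨fun p => (p.1, p.2.2.2, p.2.2.1, p.2.1), fun p => (p.1, p.2.2.2, p.2.2.1, p.2.1),
        fun p => rfl, fun p => rfl⟩ _ _ (fun p => by simp only [Equiv.coe_fn_mk]; try ring)
  calc (∑ a : Ix n, ∑ b : Ix n, R ![cx (e b), cx (e a), cx (e a), cx (e b)])
      = ∑ b : Ix n, ∑ a : Ix n, R ![cx (e b), cx (e a), cx (e a), cx (e b)] :=
        Finset.sum_comm
    _ = ∑ b : Ix n, ∑ i, ∑ j, hinv i j * (R ![cx (e b), Zv i, Zbarv j, cx (e b)]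
          + R ![cx (e b), Zbarv j, Zv i, cx (e b)]) :=
        Finset.sum_congr rfl fun b _ => step1 b
    _ = ∑ i, ∑ b : Ix n, ∑ j, hinv i j * (R ![cx (e b), Zv i, Zbarv j, cx (e b)]
          + R ![cx (e b), Zbarv j, Zv i, cx (e b)]) := Finset.sum_comm
    _ = ∑ i, ∑ j, ∑ b : Ix n, hinv i j * (R ![cx (e b), Zv i, Zbarv j, cx (e b)]
          + R ![cx (e b), Zbarv j, Zv i, cx (e b)]) :=
        Finset.sum_congr rfl fun i _ => Finset.sum_comm
    _ = ∑ i, ∑ j, hinv i j * ((∑ b, R ![cx (e b), Zv i, Zbarv j, cx (e b)])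
          + (∑ b, R ![cx (e b), Zbarv j, Zv i, cx (e b)])) := by
        refine Finset.sum_congr rfl fun i _ => Finset.sum_congr rfl fun j _ => ?_
        rw [← Finset.mul_sum, Finset.sum_add_distrib]
    _ = ∑ i, ∑ j, hinv i j * ((∑ k, ∑ l, hinv k l * (R ![Zv k, Zv i, Zbarv j, Zbarv l]
            + R ![Zbarv l, Zv i, Zbarv j, Zv k]))
          + (∑ k, ∑ l, hinv k l * (R ![Zv k, Zbarv j, Zv i, Zbarv l]
            + R ![Zbarv l, Zbarv j, Zv i, Zv k]))) := by
        refine Finset.sum_congr rfl fun i _ => Finset.sum_congr rfl fun j _ => ?_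
        rw [step2 (Zv i) (Zbarv j), step2 (Zbarv j) (Zv i)]
    _ = ∑ i, ∑ j, ∑ k, ∑ l, hinv i j * hinv k l * (R ![Zv k, Zv i, Zbarv j, Zbarv l]
          + R ![Zbarv l, Zv i, Zbarv j, Zv k] + R ![Zv k, Zbarv j, Zv i, Zbarv l]
          + R ![Zbarv l, Zbarv j, Zv i, Zv k]) := by
        refine Finset.sum_congr rfl fun i _ => Finset.sum_congr rfl fun j _ => ?_
        rw [← Finset.sum_add_distrib, Finset.mul_sum]
        refine Finset.sum_congr rfl fun k _ => ?_
        rw [← Finset.sum_add_distrib, Finset.mul_sum]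
        refine Finset.sum_congr rfl fun l _ => ?_
        ring
    _ = ∑ i, ∑ j, ∑ k, ∑ l, hinv i j * hinv k l * (-(R ![Zv i, Zbarv j, Zv k, Zbarv l])
          - R ![Zv k, Zbarv l, Zv i, Zbarv j] + 2 * R ![Zv k, Zbarv j, Zv i, Zbarv l]
          + 2 * R ![Zv i, Zbarv l, Zv k, Zbarv j]) := by
        refine Finset.sum_congr rfl fun i _ => Finset.sum_congr rfl fun j _ =>
          Finset.sum_congr rfl fun k _ => Finset.sum_congr rfl fun l _ => ?_
        rw [hbr i j k l]
    _ = -(∑ i, ∑ j, ∑ k, ∑ l, hinv i j * hinv k l * R ![Zv i, Zbarv j, Zv k, Zbarv l])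
        - (∑ i, ∑ j, ∑ k, ∑ l, hinv i j * hinv k l * R ![Zv k, Zbarv l, Zv i, Zbarv j])
        + 2 * (∑ i, ∑ j, ∑ k, ∑ l, hinv i j * hinv k l * R ![Zv k, Zbarv j, Zv i, Zbarv l])
        + 2 * (∑ i, ∑ j, ∑ k, ∑ l, hinv i j * hinv k l * R ![Zv i, Zbarv l, Zv k, Zbarv j]) := by
        rw [← sum4_pack, ← sum4_pack, ← sum4_pack, ← sum4_pack, ← sum4_pack]
        rw [← Finset.sum_neg_distrib, Finset.mul_sum, Finset.mul_sum,
          ← Finset.sum_sub_distrib, ← Finset.sum_add_distrib, ← Finset.sum_add_distrib]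
        exact Finset.sum_congr rfl fun p _ => by ring
    _ = -(∑ i, ∑ j, ∑ k, ∑ l, hinv i j * hinv k l * R ![Zv i, Zbarv j, Zv k, Zbarv l])
        - (∑ i, ∑ j, ∑ k, ∑ l, hinv i j * hinv k l * R ![Zv i, Zbarv j, Zv k, Zbarv l])
        + 2 * (∑ i, ∑ j, ∑ k, ∑ l, hinv i l * hinv k j * R ![Zv i, Zbarv j, Zv k, Zbarv l])
        + 2 * (∑ i, ∑ j, ∑ k, ∑ l, hinv i l * hinv k j * R ![Zv i, Zbarv j, Zv k, Zbarv l]) := by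
        rw [reB, reC, reD]
    _ = 4 * (∑ i, ∑ j, ∑ k, ∑ l, hinv i l * hinv k j * R ![Zv i, Zbarv j, Zv k, Zbarv l])
        - 2 * (∑ i, ∑ j, ∑ k, ∑ l, hinv i j * hinv k l * R ![Zv i, Zbarv j, Zv k, Zbarv l]) := by
        ring
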